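/- The multilinear component Lie(n) of the free Lie algebra on x_1,...,x_n over any commutative ring k is a free k-module of rank (n-1)!, with basis the left-normed brackets [x_{σ(1)},[x_{σ(2)},[...,[x_{σ(n-1)},x_n]...]]] for σ ranging over the symmetric group S_{n-1}. -/

import Mathlib

/-!
STATEMENT 8: the multilinear component `Lie(n)` of the free Lie algebra on `x_1,...,x_n`
over a commutative ring `k` is free of rank `(n-1)!`, with basis the left-normed brackets
`[x_{σ(1)},[...,[x_{σ(n-1)}, x_n]...]]`, `σ ∈ S_{n-1}`.  We write `n = m + 1` (so `n ≥ 1`),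
define multilinear Lie monomials inductively (each generator occurring exactly once), and
express the basis property as linear independence together with spanning of `Lie(n)`.
-/

/-- `IsMultilinearLieMonomial s x` : `x` is a Lie monomial in which exactly the generators
indexed by `s` occur, each exactly once. -/
inductive IsMultilinearLieMonomial {k : Type*} [CommRing k] {n : ℕ} :
    Finset (Fin n) → FreeLieAlgebra k (Fin n) → Prop
  | of (i : Fin n) : IsMultilinearLieMonomial {i} (FreeLieAlgebra.of k i)
  | bracket {s t : Finset (Fin n)} {x y : FreeLieAlgebra k (Fin n)} :
      IsMultilinearLieMonomial s x → IsMultilinearLieMonomial t y → Disjoint s t →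
      IsMultilinearLieMonomial (s ∪ t) ⁅x, y⁆

/-- The multilinear part `Lie(n)` of the free Lie algebra. -/
noncomputable def LieOperadComponent (k : Type*) [CommRing k] (n : ℕ) :
    Submodule k (FreeLieAlgebra k (Fin n)) :=
  Submodule.span k {x | IsMultilinearLieMonomial Finset.univ x}

/-- The left-normed bracket `[x_{σ(1)},[...,[x_{σ(n-1)}, x_n]...]]` in the free Lie algebra. -/
noncomputable def leftNormedBasisElt (k : Type*) [CommRing k] (m : ℕ)
    (σ : Equiv.Perm (Fin m)) : FreeLieAlgebra k (Fin (m + 1)) :=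
  (List.finRange m).foldr (fun i acc => ⁅FreeLieAlgebra.of k (Fin.castSucc (σ i)), acc⁆)
    (FreeLieAlgebra.of k (Fin.last m))

namespace LieOperadProof

variable (k : Type*) [CommRing k] {m : ℕ}


noncomputable def ww (l : List (Fin m)) : FreeLieAlgebra k (Fin (m + 1)) :=
  l.foldr (fun i acc => ⁅FreeLieAlgebra.of k i.castSucc, acc⁆) (FreeLieAlgebra.of k (Fin.last m))

def idxSet (l : List (Fin m)) : Finset (Fin (m + 1)) :=
  insert (Fin.last m) (l.toFinset.image Fin.castSucc)

lemma mem_idxSet_iff {l : List (Fin m)} {i : Fin (m+1)} :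
    i ∈ idxSet l ↔ i = Fin.last m ∨ ∃ j ∈ l, Fin.castSucc j = i := by
  simp [idxSet]

lemma idxSet_cons (j : Fin m) (l : List (Fin m)) :
    idxSet (j :: l) = {Fin.castSucc j} ∪ idxSet l := by
  simp only [idxSet, List.toFinset_cons, Finset.image_insert]
  ext a; simp [or_left_comm]

lemma ww_cons (j : Fin m) (l : List (Fin m)) :
    ww k (j :: l) = ⁅FreeLieAlgebra.of k j.castSucc, ww k l⁆ := rfl

lemma castSucc_mem_idxSet_iff {l : List (Fin m)} {j : Fin m} :
    Fin.castSucc j ∈ idxSet l ↔ j ∈ l := by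
  simp [mem_idxSet_iff, Fin.castSucc_injective _ |>.eq_iff, (Fin.castSucc_lt_last j).ne]

lemma ww_isMonomial {l : List (Fin m)} (hl : l.Nodup) :
    IsMultilinearLieMonomial (idxSet l) (ww k l) := by
  induction l with
  | nil => exact IsMultilinearLieMonomial.of _
  | cons j l ih =>
    rw [idxSet_cons, ww_cons]
    refine IsMultilinearLieMonomial.bracket (IsMultilinearLieMonomial.of _)
      (ih (List.nodup_cons.mp hl).2) ?_
    simp only [Finset.disjoint_singleton_left, castSucc_mem_idxSet_iff]
    exact (List.nodup_cons.mp hl).1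

/-- the target span of lists with a given index set -/
noncomputable def wwSpan (u : Finset (Fin (m+1))) : Submodule k (FreeLieAlgebra k (Fin (m+1))) :=
  Submodule.span k {y | ∃ l : List (Fin m), l.Nodup ∧ idxSet l = u ∧ y = ww k l}

/-- bracketing with a monomial is linear -/
noncomputable def adL (x : FreeLieAlgebra k (Fin (m+1))) :
    FreeLieAlgebra k (Fin (m+1)) →ₗ[k] FreeLieAlgebra k (Fin (m+1)) where
  toFun y := ⁅x, y⁆
  map_add' := lie_add x
  map_smul' c y := lie_smul c x y

lemma lemmaA {s : Finset (Fin (m+1))} {x : FreeLieAlgebra k (Fin (m+1))}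
    (hx : IsMultilinearLieMonomial s x) (hs : Fin.last m ∉ s) :
    ∀ l : List (Fin m), l.Nodup → (∀ j ∈ l, Fin.castSucc j ∉ s) →
      ⁅x, ww k l⁆ ∈ wwSpan k (s ∪ idxSet l) := by
  induction hx with
  | of i =>
    intro l hl hdisj
    have hi : i ≠ Fin.last m := by rintro rfl; exact hs (Finset.mem_singleton_self _)
    obtain ⟨j, rfl⟩ := Fin.exists_castSucc_eq.mpr hi
    have hj : j ∉ l := fun h => hdisj j h (Finset.mem_singleton_self _)
    refine Submodule.subset_span ⟨j :: l, List.nodup_cons.mpr ⟨hj, hl⟩, ?_, (ww_cons k j l).symm⟩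
    rw [idxSet_cons]
  | bracket ha hb hdis iha ihb =>
    intro l hl hdisj
    rename_i sa sb a b
    have hsa : Fin.last m ∉ sa := fun h => hs (Finset.mem_union_left _ h)
    have hsb : Fin.last m ∉ sb := fun h => hs (Finset.mem_union_right _ h)
    rw [lie_lie]
    have key : ∀ (sc sd : Finset (Fin (m+1))) (c d : FreeLieAlgebra k (Fin (m+1))),
        IsMultilinearLieMonomial sc c → Fin.last m ∉ sc →
        (∀ l' : List (Fin m), l'.Nodup → (∀ j ∈ l', Fin.castSucc j ∉ sc) →
          ⁅c, ww k l'⁆ ∈ wwSpan k (sc ∪ idxSet l')) →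
        Disjoint sc sd → Fin.last m ∉ sd →
        (∀ j ∈ l, Fin.castSucc j ∉ sc) →
        d ∈ wwSpan k (sd ∪ idxSet l) →
        ⁅c, d⁆ ∈ wwSpan k (sc ∪ sd ∪ idxSet l) := by
      intro sc sd c d hc hlc ihc hcd hld hcl hdmem
      have : adL k c d ∈ wwSpan k (sc ∪ sd ∪ idxSet l) := by
        refine Submodule.span_induction ?_ ?_ ?_ ?_ hdmem
        · rintro y ⟨l', hl', hidx', rfl⟩
          have hcond : ∀ j ∈ l', Fin.castSucc j ∉ sc := by
            intro j hj hjc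
            have : Fin.castSucc j ∈ idxSet l' := castSucc_mem_idxSet_iff.mpr hj
            rw [hidx'] at this
            rcases Finset.mem_union.mp this with h | h
            · exact (Finset.disjoint_left.mp hcd hjc) h
            · rcases mem_idxSet_iff.mp h with h1 | ⟨j', hj', hj'e⟩
              · exact (Fin.castSucc_lt_last j).ne h1
              · have hjj : j' = j := Fin.castSucc_injective _ hj'e
                exact hcl j (hjj ▸ hj') hjc
          have := ihc l' hl' hcond
          rw [hidx'] at this
          simpa [adL, Finset.union_assoc] using this
        · simp [adL]
        · intro y z _ _ hy hz; rw [map_add]; exact Submodule.add_mem _ hy hz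
        · intro c' y _ hy; rw [map_smul]; exact Submodule.smul_mem _ _ hy
      simpa [adL] using this
    have hca : ∀ j ∈ l, Fin.castSucc j ∉ sa := fun j hj h =>
      hdisj j hj (Finset.mem_union_left _ h)
    have hcb : ∀ j ∈ l, Fin.castSucc j ∉ sb := fun j hj h =>
      hdisj j hj (Finset.mem_union_right _ h)
    have t1 := key sa sb a ⁅b, ww k l⁆ ha hsa (iha hsa) hdis hsb hca (ihb hsb l hl hcb)
    have t2 := key sb sa b ⁅a, ww k l⁆ hb hsb (ihb hsb) hdis.symm hsa hcb (iha hsa l hl hca)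
    rw [Finset.union_comm sb sa] at t2
    exact Submodule.sub_mem _ t1 t2

lemma lemmaB {s : Finset (Fin (m+1))} {x : FreeLieAlgebra k (Fin (m+1))}
    (hx : IsMultilinearLieMonomial s x) (hs : Fin.last m ∈ s) :
    x ∈ wwSpan k s := by
  induction hx with
  | of i =>
    have : i = Fin.last m := (Finset.mem_singleton.mp hs).symm
    subst this
    refine Submodule.subset_span ⟨[], List.nodup_nil, ?_, rfl⟩
    simp [idxSet]
  | bracket ha hb hdis iha ihb =>
    rename_i sa sb a b
    rcases Finset.mem_union.mp hs with h | h
    · -- last ∈ sa : ⁅a,b⁆ = -⁅b,a⁆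
      have hsb : Fin.last m ∉ sb := Finset.disjoint_left.mp hdis h
      have hamem := iha h
      have : adL k b a ∈ wwSpan k (sb ∪ sa) := by
        refine Submodule.span_induction ?_ ?_ ?_ ?_ hamem
        · rintro y ⟨l, hl, hidx, rfl⟩
          have hcond : ∀ j ∈ l, Fin.castSucc j ∉ sb := by
            intro j hj hjb
            have : Fin.castSucc j ∈ idxSet l := castSucc_mem_idxSet_iff.mpr hj
            rw [hidx] at this
            exact Finset.disjoint_left.mp hdis this hjb
          have := lemmaA k hb hsb l hl hcond
          rw [hidx] at this
          simpa [adL, Finset.union_comm] using this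
        · simp [adL]
        · intro y z _ _ hy hz; rw [map_add]; exact Submodule.add_mem _ hy hz
        · intro c' y _ hy; rw [map_smul]; exact Submodule.smul_mem _ _ hy
      have : ⁅b, a⁆ ∈ wwSpan k (sa ∪ sb) := by
        rw [Finset.union_comm]; simpa [adL] using this
      have := Submodule.neg_mem _ this
      rwa [← lie_skew] 
    · have hsa : Fin.last m ∉ sa := Finset.disjoint_right.mp hdis h
      have hbmem := ihb h
      have : adL k a b ∈ wwSpan k (sa ∪ sb) := by
        refine Submodule.span_induction ?_ ?_ ?_ ?_ hbmem
        · rintro y ⟨l, hl, hidx, rfl⟩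
          have hcond : ∀ j ∈ l, Fin.castSucc j ∉ sa := by
            intro j hj hja
            have : Fin.castSucc j ∈ idxSet l := castSucc_mem_idxSet_iff.mpr hj
            rw [hidx] at this
            exact Finset.disjoint_right.mp hdis this hja
          have := lemmaA k ha hsa l hl hcond
          rw [hidx] at this
          simpa [adL] using this
        · simp [adL]
        · intro y z _ _ hy hz; rw [map_add]; exact Submodule.add_mem _ hy hz
        · intro c' y _ hy; rw [map_smul]; exact Submodule.smul_mem _ _ hy
      simpa [adL] using this

noncomputable def lnb (σ : Equiv.Perm (Fin m)) : FreeLieAlgebra k (Fin (m + 1)) :=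
  leftNormedBasisElt k m σ

lemma lnb_eq_ww (σ : Equiv.Perm (Fin m)) :
    lnb k σ = ww k (List.map σ (List.finRange m)) := by
  simp [lnb, leftNormedBasisElt, ww, List.foldr_map]

lemma nodup_perm_list (σ : Equiv.Perm (Fin m)) : (List.map σ (List.finRange m)).Nodup :=
  (List.nodup_finRange m).map σ.injective

lemma idxSet_perm_list (σ : Equiv.Perm (Fin m)) :
    idxSet (List.map (⇑σ) (List.finRange m)) = Finset.univ := by
  ext i
  simp only [Finset.mem_univ, iff_true, mem_idxSet_iff]
  rcases eq_or_ne i (Fin.last m) with rfl | h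
  · exact Or.inl rfl
  · obtain ⟨j, rfl⟩ := Fin.exists_castSucc_eq.mpr h
    exact Or.inr ⟨j, by simp [List.mem_map]; exact ⟨σ.symm j, σ.apply_symm_apply j⟩, rfl⟩

lemma ww_set_eq_range :
    {y : FreeLieAlgebra k (Fin (m+1)) |
      ∃ l : List (Fin m), l.Nodup ∧ idxSet l = Finset.univ ∧ y = ww k l}
      = Set.range (lnb k (m := m)) := by
  ext y
  constructor
  · rintro ⟨l, hl, hidx, rfl⟩
    have hmem : ∀ j : Fin m, j ∈ l := by
      intro j
      have : Fin.castSucc j ∈ idxSet l := hidx ▸ Finset.mem_univ _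
      exact castSucc_mem_idxSet_iff.mp this
    have htf : l.toFinset = Finset.univ := Finset.eq_univ_iff_forall.mpr
      (fun j => List.mem_toFinset.mpr (hmem j))
    have hlen : l.length = m := by
      have := List.toFinset_card_of_nodup hl
      rw [htf, Finset.card_univ, Fintype.card_fin] at this
      omega
    set f : Fin m → Fin m := fun i => l.get (Fin.cast hlen.symm i) with hf
    have hinj : Function.Injective f := by
      intro a b hab
      have := List.nodup_iff_injective_get.mp hl hab
      simpa using congrArg (Fin.cast hlen) this
    have hbij : Function.Bijective f := (Finite.injective_iff_bijective).mp hinj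
    refine ⟨Equiv.ofBijective f hbij, ?_⟩
    rw [lnb_eq_ww]
    congr 1
    apply List.ext_get (by simp [hlen])
    intro i h1 h2
    simp [f, Fin.cast]
  · rintro ⟨σ, rfl⟩
    exact ⟨_, nodup_perm_list σ, idxSet_perm_list σ, lnb_eq_ww k σ⟩

attribute [local instance 100] LieRing.ofAssociativeRing

noncomputable def τ : FreeLieAlgebra k (Fin (m+1)) →ₗ⁅k⁆ FreeAlgebra k (Fin (m+1)) :=
  FreeLieAlgebra.lift k (FreeAlgebra.ι k)

noncomputable def φ (x : FreeLieAlgebra k (Fin (m+1))) :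
    MonoidAlgebra k (FreeMonoid (Fin (m+1))) :=
  FreeAlgebra.equivMonoidAlgebraFreeMonoid (τ k x)

def word (l : List (Fin m)) : FreeMonoid (Fin (m+1)) :=
  FreeMonoid.ofList (l.map Fin.castSucc ++ [Fin.last m])

lemma word_cons (j : Fin m) (l : List (Fin m)) :
    word (j :: l) = FreeMonoid.of (Fin.castSucc j) * word l := rfl

lemma φ_of (i : Fin (m+1)) :
    φ k (FreeLieAlgebra.of k i) = MonoidAlgebra.single (FreeMonoid.of i) 1 := by
  simp [φ, τ, FreeLieAlgebra.lift_of_apply, FreeAlgebra.equivMonoidAlgebraFreeMonoid]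

lemma φ_lie (x y : FreeLieAlgebra k (Fin (m+1))) :
    φ k ⁅x, y⁆ = φ k x * φ k y - φ k y * φ k x := by
  simp only [φ, LieHom.map_lie, Ring.lie_def, map_sub, map_mul]

lemma lemmaC : ∀ l l₂ : List (Fin m), l₂.length = l.length →
    (φ k (ww k l)).coeff (word l₂) = if l₂ = l then 1 else 0 := by
  intro l
  induction l with
  | nil =>
    intro l₂ hlen
    rw [List.length_eq_zero_iff.mp hlen]
    have : ww k ([] : List (Fin m)) = FreeLieAlgebra.of k (Fin.last m) := rfl
    rw [this, φ_of]
    simp only [if_pos rfl]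
    have : word ([] : List (Fin m)) = FreeMonoid.of (Fin.last m) := rfl
    rw [this]
    classical
    rw [MonoidAlgebra.coeff_single, Finsupp.single_apply, if_pos rfl]
    simp
  | cons j l ih =>
    intro l₂ hlen
    match l₂, hlen with
    | j₂ :: l₂', hlen =>
    have hlen' : l₂'.length = l.length := by simpa using hlen
    rw [ww_cons, φ_lie, φ_of]
    have hterm2 : (φ k (ww k l) * MonoidAlgebra.single (FreeMonoid.of (Fin.castSucc j)) (1:k)).coeff
        (word (j₂ :: l₂')) = 0 := by
      apply MonoidAlgebra.mul_single_apply_of_not_exists_mul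
      rintro ⟨d, hd⟩
      have := congrArg FreeMonoid.toList hd
      simp only [word, FreeMonoid.toList_mul, FreeMonoid.toList_of,
        FreeMonoid.toList_ofList] at this
      have hlast := congrArg List.getLast? this
      rw [List.getLast?_concat] at hlast
      rw [List.getLast?_concat] at hlast
      exact absurd (Option.some_injective _ hlast) (Fin.castSucc_lt_last j).ne'
    rcases eq_or_ne j₂ j with rfl | hne
    · have H : ∀ a, FreeMonoid.of (Fin.castSucc j₂) * a = word (j₂ :: l₂') ↔ a = word l₂' := by
        intro a
        constructor
        · intro h
          rw [word_cons] at h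
          exact mul_left_cancel h
        · rintro rfl; exact (word_cons j₂ l₂').symm
      rw [MonoidAlgebra.coeff_sub, Finsupp.sub_apply, hterm2, sub_zero,
        MonoidAlgebra.coeff_single_mul_eq_mul_coeff _ (fun a _ => H a), one_mul, ih l₂' hlen']
      simp
    · have hterm1 : (MonoidAlgebra.single (FreeMonoid.of (Fin.castSucc j)) (1:k) * φ k (ww k l)).coeff
          (word (j₂ :: l₂')) = 0 := by
        apply MonoidAlgebra.single_mul_apply_of_not_exists_mul
        rintro ⟨d, hd⟩
        have := congrArg FreeMonoid.toList hd
        simp only [word, FreeMonoid.toList_mul, FreeMonoid.toList_of,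
          FreeMonoid.toList_ofList, List.map_cons] at this
        have hhead := congrArg List.head? this
        simp at hhead
        exact hne hhead
      rw [MonoidAlgebra.coeff_sub, Finsupp.sub_apply, hterm1, hterm2, sub_zero]
      simp [hne]

noncomputable def Φ (u : FreeMonoid (Fin (m+1))) : FreeLieAlgebra k (Fin (m+1)) →ₗ[k] k :=
  (Finsupp.lapply u) ∘ₗ (MonoidAlgebra.coeffLinearEquiv k).toLinearMap ∘ₗ
    (FreeAlgebra.equivMonoidAlgebraFreeMonoid (R := k) (X := Fin (m+1))).toLinearMap ∘ₗ
    (τ k).toLinearMap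

lemma Φ_apply (u : FreeMonoid (Fin (m+1))) (x : FreeLieAlgebra k (Fin (m+1))) :
    Φ k u x = (φ k x).coeff u := rfl

lemma permList_inj {σ σ' : Equiv.Perm (Fin m)}
    (h : List.map ⇑σ (List.finRange m) = List.map ⇑σ' (List.finRange m)) : σ = σ' := by
  ext i
  have := List.map_eq_map_iff.mp h i (List.mem_finRange i)
  exact congrArg Fin.val this

lemma lnb_indep : LinearIndependent k (lnb k (m := m)) := by
  rw [Fintype.linearIndependent_iff]
  intro g hg σ
  have h0 := congrArg (Φ k (word (List.map ⇑σ (List.finRange m)))) hg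
  rw [map_sum, map_zero] at h0
  have hterm : ∀ σ' : Equiv.Perm (Fin m),
      Φ k (word (List.map ⇑σ (List.finRange m))) (g σ' • lnb k σ')
        = if σ = σ' then g σ' else 0 := by
    intro σ'
    rw [map_smul, Φ_apply, lnb_eq_ww, lemmaC k _ _ (by simp)]
    rcases eq_or_ne σ σ' with rfl | hne
    · simp
    · rw [if_neg (fun h => hne (permList_inj h)), if_neg hne]
      simp
  rw [Finset.sum_congr rfl (fun σ' _ => hterm σ'), Finset.sum_ite_eq (Finset.univ) σ g] at h0
  simpa using h0

theorem final : LinearIndependent k (lnb k (m := m)) ∧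
    Submodule.span k (Set.range (lnb k (m := m))) = LieOperadComponent k (m + 1) := by
  refine ⟨lnb_indep k, le_antisymm ?_ ?_⟩
  · rw [Submodule.span_le]
    rintro y ⟨σ, rfl⟩
    rw [lnb_eq_ww]
    have := ww_isMonomial k (nodup_perm_list σ)
    rw [idxSet_perm_list] at this
    exact Submodule.subset_span this
  · rw [LieOperadComponent, Submodule.span_le]
    intro x hx
    have := lemmaB k hx (Finset.mem_univ _)
    rwa [wwSpan, ww_set_eq_range] at this

end LieOperadProof

theorem lieOperad_free_of_rank_factorial (k : Type*) [CommRing k] (m : ℕ) :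
    LinearIndependent k (leftNormedBasisElt k m) ∧
    Submodule.span k (Set.range (leftNormedBasisElt k m)) = LieOperadComponent k (m + 1) := by
  have h : leftNormedBasisElt k m = LieOperadProof.lnb k (m := m) := rfl
  rw [h]
  exact LieOperadProof.final k
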